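/- arXiv:1610.09320 — 3 statements merged into one kernel-verified Lean document; each statement's English description precedes it below -/
import Mathlib

section
/- An edge e = u→v is irredundant in the net (G,s,t) if and only if there exist a path from s to u and a path from v to t that are vertex-disjoint. -/
/-- A directed multigraph: a type of vertices, a type of edges,
and source/target maps. -/
structure MultiDigraph (V E : Type) where
  src : E → V
  tgt : E → V

namespace MultiDigraph

variable {V E : Type}

/-- `G.IsWalk u p v` : the list of edges `p` forms a walk from `u` to `v`. -/
def IsWalk (G : MultiDigraph V E) : V → List E → V → Prop
  | u, [], v => u = v
  | u, e :: p, v => G.src e = u ∧ IsWalk G (G.tgt e) p v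

/-- The list of vertices visited by a walk starting at `u` with edges `p`. -/
def walkVerts (G : MultiDigraph V E) : V → List E → List V
  | u, [] => [u]
  | u, e :: p => u :: walkVerts G (G.tgt e) p

/-- A simple path: a walk repeating no vertex. -/
def IsSimplePath (G : MultiDigraph V E) (u : V) (p : List E) (v : V) : Prop :=
  G.IsWalk u p v ∧ (G.walkVerts u p).Nodup

/-- The set of simple `st`-paths using only edges from `F`. -/
def SP (G : MultiDigraph V E) (F : Set E) (s t : V) : Set (List E) :=
  {p | G.IsSimplePath s p t ∧ ∀ e ∈ p, e ∈ F}

/-- An edge is irredundant if it lies on some simple `st`-path. -/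
def EdgeIrredundant (G : MultiDigraph V E) (s t : V) (e : E) : Prop :=
  ∃ p, G.IsSimplePath s p t ∧ e ∈ p

/-- A vertex is irredundant if it lies on some simple `st`-path. -/
def VertexIrredundant (G : MultiDigraph V E) (s t : V) (x : V) : Prop :=
  ∃ p, G.IsSimplePath s p t ∧ x ∈ G.walkVerts s p

/-- A net is `st`-connected if every vertex lies on some `st`-path. -/
def STConnected (G : MultiDigraph V E) (s t : V) : Prop :=
  ∀ x : V, ∃ p, G.IsWalk s p t ∧ x ∈ G.walkVerts s p

end MultiDigraph

namespace MultiDigraph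

variable {V E : Type}

lemma isWalk_append (G : MultiDigraph V E) :
    ∀ (p : List E) (u v : V) (q : List E),
      G.IsWalk u (p ++ q) v ↔ ∃ w, G.IsWalk u p w ∧ G.IsWalk w q v
  | [], u, v, q => by
    simp [IsWalk]
  | a :: p, u, v, q => by
    rw [List.cons_append]
    show (_ ∧ _) ↔ _
    rw [isWalk_append G p]
    constructor
    · rintro ⟨h1, w, h2, h3⟩; exact ⟨w, ⟨h1, h2⟩, h3⟩
    · rintro ⟨w, ⟨h1, h2⟩, h3⟩; exact ⟨h1, w, h2, h3⟩

lemma walkVerts_append_cons (G : MultiDigraph V E) :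
    ∀ (p : List E) (u : V) (a : E) (q : List E),
      G.walkVerts u (p ++ a :: q) = G.walkVerts u p ++ G.walkVerts (G.tgt a) q
  | [], u, a, q => by simp [walkVerts]
  | b :: p, u, a, q => by
    simp [walkVerts, walkVerts_append_cons G p]

lemma walk_split (G : MultiDigraph V E) :
    ∀ (p : List E) (u v x : V), G.IsWalk u p v → x ∈ G.walkVerts u p →
      ∃ p2, G.IsWalk x p2 v ∧ G.walkVerts x p2 <:+ G.walkVerts u p
  | [], u, v, x, hw, hx => by
    simp [walkVerts] at hx
    exact ⟨[], by subst hx; exact hw, by simp [walkVerts, hx]⟩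
  | a :: p, u, v, x, hw, hx => by
    rw [walkVerts, List.mem_cons] at hx
    rcases hx with hx | hx
    · subst hx; exact ⟨a :: p, hw, List.suffix_refl _⟩
    · obtain ⟨p2, h1, h2⟩ := walk_split G p (G.tgt a) v x hw.2 hx
      exact ⟨p2, h1, h2.trans (List.suffix_cons _ _)⟩

lemma walk_shorten (G : MultiDigraph V E) :
    ∀ (p : List E) (u v : V), G.IsWalk u p v →
      ∃ p', G.IsSimplePath u p' v ∧
        ∀ y ∈ G.walkVerts u p', y ∈ G.walkVerts u p
  | [], u, v, hw => ⟨[], ⟨hw, by simp [walkVerts]⟩, fun y hy => hy⟩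
  | a :: p, u, v, hw => by
    obtain ⟨p', ⟨hw', hnd⟩, hsub⟩ := walk_shorten G p (G.tgt a) v hw.2
    by_cases hu : u ∈ G.walkVerts (G.tgt a) p'
    · obtain ⟨p2, h1, h2⟩ := G.walk_split p' (G.tgt a) v u hw' hu
      refine ⟨p2, ⟨h1, h2.sublist.nodup hnd⟩, fun y hy => ?_⟩
      exact List.mem_cons_of_mem _ (hsub y (h2.subset hy))
    · refine ⟨a :: p', ⟨⟨hw.1, hw'⟩, ?_⟩, fun y hy => ?_⟩
      · simpa [walkVerts, hnd] using hu
      · rw [walkVerts, List.mem_cons] at hy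
        rw [walkVerts, List.mem_cons]
        rcases hy with hy | hy
        · exact Or.inl hy
        · exact Or.inr (hsub y hy)

end MultiDigraph

open MultiDigraph in
/-- An edge `e = u→v` is irredundant in `(G,s,t)` iff there exist a path
`s ⇝ u` and a path `v ⇝ t` that are vertex-disjoint. -/
theorem stmt1 {V E : Type} (G : MultiDigraph V E) (s t : V) (e : E) :
    G.EdgeIrredundant s t e ↔
      ∃ p q, G.IsWalk s p (G.src e) ∧ G.IsWalk (G.tgt e) q t ∧
        ∀ x ∈ G.walkVerts s p, x ∉ G.walkVerts (G.tgt e) q := by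
  constructor
  · rintro ⟨p, ⟨hw, hnd⟩, he⟩
    obtain ⟨p1, p2, rfl⟩ := List.append_of_mem he
    obtain ⟨w, hw1, hw2⟩ := (G.isWalk_append p1 s t (e :: p2)).1 hw
    obtain ⟨hsrc, hw2'⟩ := hw2
    rw [G.walkVerts_append_cons] at hnd
    refine ⟨p1, p2, hsrc ▸ hw1, hw2', ?_⟩
    have := (List.nodup_append.1 hnd).2.2
    exact fun x hx hx' => this x hx x hx' rfl
  · rintro ⟨p, q, hp, hq, hdisj⟩
    obtain ⟨p', ⟨hwp, hndp⟩, hsubp⟩ := G.walk_shorten p s (G.src e) hp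
    obtain ⟨q', ⟨hwq, hndq⟩, hsubq⟩ := G.walk_shorten q (G.tgt e) t hq
    refine ⟨p' ++ e :: q', ⟨?_, ?_⟩, by simp⟩
    · exact (G.isWalk_append p' s t (e :: q')).2 ⟨G.src e, hwp, rfl, hwq⟩
    · rw [G.walkVerts_append_cons]
      exact List.Nodup.append hndp hndq
        (fun x hx hx' => hdisj x (hsubp x hx) (hsubq x hx'))
end

section
/- Let (G,s,t) be an st-connected net and C a simple cycle of G having exactly one entry node or exactly one exit node. Then C contains at least one redundant edge. -/
namespace MultiDigraph

variable {V E : Type}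

/-- A simple cycle based at `v` with edge list `p`: a nonempty closed walk
whose vertices (except the repeated endpoint) are all distinct. -/
def IsSimpleCycle (G : MultiDigraph V E) (v : V) (p : List E) : Prop :=
  G.IsWalk v p v ∧ p ≠ [] ∧ ((G.walkVerts v p).dropLast).Nodup

/-- The list of (distinct) vertices of a cycle. -/
def cycleVerts (G : MultiDigraph V E) (v : V) (p : List E) : List V :=
  (G.walkVerts v p).dropLast

/-- The set of vertices of a cycle. -/
def cycleSet (G : MultiDigraph V E) (v : V) (p : List E) : Set V :=
  {x | x ∈ G.cycleVerts v p}

/-- `u` is an entry node of the vertex set `C`: `u ∈ C` and some simple path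
from `s` to `u` meets `C` only in `u`. -/
def EntryNode (G : MultiDigraph V E) (s : V) (C : Set V) (u : V) : Prop :=
  u ∈ C ∧ ∃ q, G.IsSimplePath s q u ∧ ∀ x ∈ G.walkVerts s q, x ∈ C → x = u

/-- `u` is an exit node of the vertex set `C`: `u ∈ C` and some simple path
from `u` to `t` meets `C` only in `u`. -/
def ExitNode (G : MultiDigraph V E) (t : V) (C : Set V) (u : V) : Prop :=
  u ∈ C ∧ ∃ q, G.IsSimplePath u q t ∧ ∀ x ∈ G.walkVerts u q, x ∈ C → x = u

/-- `q` is an entry path into `C` ending at `u`. -/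
def IsEntryPath (G : MultiDigraph V E) (s : V) (C : Set V) (q : List E) (u : V) : Prop :=
  u ∈ C ∧ G.IsSimplePath s q u ∧ ∀ x ∈ G.walkVerts s q, x ∈ C → x = u

/-- `q` is an exit path from `C` starting at `u`. -/
def IsExitPath (G : MultiDigraph V E) (t : V) (C : Set V) (q : List E) (u : V) : Prop :=
  u ∈ C ∧ G.IsSimplePath u q t ∧ ∀ x ∈ G.walkVerts u q, x ∈ C → x = u

/-- Length of a shortest directed walk from `u` to `v`. -/
noncomputable def dist (G : MultiDigraph V E) (u v : V) : ℕ :=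
  sInf {n | ∃ p, G.IsWalk u p v ∧ p.length = n}

/-- `d_s(C)`: the minimum over `u ∈ C` of `dist s u`. -/
noncomputable def dS (G : MultiDigraph V E) (s : V) (C : Set V) : ℕ :=
  sInf {n | ∃ u ∈ C, G.dist s u = n}

/-- `d_t(C)`: the minimum over `u ∈ C` of `dist u t`. -/
noncomputable def dT (G : MultiDigraph V E) (t : V) (C : Set V) : ℕ :=
  sInf {n | ∃ u ∈ C, G.dist u t = n}

/-- An `s`-minimal cycle: a simple cycle whose distance from `s` is minimal
among all simple cycles of `G`. -/
def SMinimal (G : MultiDigraph V E) (s v : V) (p : List E) : Prop :=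
  G.IsSimpleCycle v p ∧
    ∀ v' p', G.IsSimpleCycle v' p' →
      G.dS s (G.cycleSet v p) ≤ G.dS s (G.cycleSet v' p')

end MultiDigraph

namespace MultiDigraph

variable {V E : Type} (G : MultiDigraph V E)

lemma getElem_congr_idx {α : Type*} (l : List α) {i j : ℕ} (h : i = j)
    (hi : i < l.length) : l[i] = l[j]'(h ▸ hi) := by subst h; rfl

lemma walkVerts_length (u : V) (p : List E) :
    (G.walkVerts u p).length = p.length + 1 := by
  induction p generalizing u with
  | nil => rfl
  | cons e q ih => simp [walkVerts, ih]

lemma walkVerts_getElem_zero (u : V) (p : List E) (h : 0 < (G.walkVerts u p).length) :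
    (G.walkVerts u p)[0] = u := by
  cases p <;> rfl

lemma walk_getElem {u v : V} {p : List E} (hw : G.IsWalk u p v) (i : ℕ) (hi : i < p.length) :
    G.src p[i] = (G.walkVerts u p)[i]'(by rw [walkVerts_length]; omega) ∧
    G.tgt p[i] = (G.walkVerts u p)[i+1]'(by rw [walkVerts_length]; omega) := by
  induction p generalizing u i with
  | nil => simp at hi
  | cons e q ih =>
    obtain ⟨h1, h2⟩ := hw
    cases i with
    | zero =>
      refine ⟨by simpa [walkVerts] using h1, ?_⟩
      show G.tgt e = (u :: G.walkVerts (G.tgt e) q)[1]'(by simp [walkVerts_length])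
      simp [walkVerts_getElem_zero]
    | succ i =>
      have := ih h2 i (by simpa using hi)
      simpa [walkVerts] using this

lemma walk_getElem_last {u v : V} {p : List E} (hw : G.IsWalk u p v) :
    (G.walkVerts u p)[p.length]'(by rw [walkVerts_length]; omega) = v := by
  induction p generalizing u with
  | nil => simpa [walkVerts, IsWalk] using hw
  | cons e q ih => simpa [walkVerts] using ih hw.2

lemma walk_take {u v : V} {p : List E} (hw : G.IsWalk u p v) (j : ℕ) (hj : j ≤ p.length) :
    G.IsWalk u (p.take j) ((G.walkVerts u p)[j]'(by rw [walkVerts_length]; omega)) ∧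
    G.walkVerts u (p.take j) = (G.walkVerts u p).take (j+1) := by
  induction p generalizing u j with
  | nil =>
    have hj0 : j = 0 := by simpa using hj
    subst hj0
    exact ⟨rfl, by simp [walkVerts]⟩
  | cons e q ih =>
    cases j with
    | zero =>
      refine ⟨?_, by simp [walkVerts]⟩
      show G.IsWalk u [] _
      show u = _
      simp [walkVerts]
    | succ j =>
      obtain ⟨h1, h2⟩ := hw
      obtain ⟨ih1, ih2⟩ := ih h2 j (by simpa using hj)
      refine ⟨⟨h1, by simpa [walkVerts] using ih1⟩, ?_⟩
      simp only [List.take_succ_cons, walkVerts, ih2]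

lemma walk_drop {u v : V} {p : List E} (hw : G.IsWalk u p v) (j : ℕ) (hj : j ≤ p.length) :
    G.IsWalk ((G.walkVerts u p)[j]'(by rw [walkVerts_length]; omega)) (p.drop j) v ∧
    G.walkVerts ((G.walkVerts u p)[j]'(by rw [walkVerts_length]; omega)) (p.drop j)
      = (G.walkVerts u p).drop j := by
  induction p generalizing u j with
  | nil =>
    have hj0 : j = 0 := by simpa using hj
    subst hj0
    refine ⟨?_, ?_⟩
    · have : (G.walkVerts u [])[0]'(by simp [walkVerts]) = u := rfl
      simpa [this] using hw
    · rfl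
  | cons e q ih =>
    cases j with
    | zero =>
      have h0 : (G.walkVerts u (e :: q))[0]'(by simp [walkVerts]) = u :=
        G.walkVerts_getElem_zero u (e :: q) (by simp [walkVerts])
      constructor
      · rw [List.drop_zero]; exact hw
      · simp only [List.drop_zero, h0]; rfl
    | succ j =>
      obtain ⟨h1, h2⟩ := hw
      obtain ⟨ih1, ih2⟩ := ih h2 j (by simpa using hj)
      constructor
      · simpa [walkVerts] using ih1
      · simpa [walkVerts] using ih2

lemma main_entry (s t : V) (C : Set V) (u₀ : V)
    (huniq : ∀ u, G.EntryNode s C u → u = u₀)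
    (e : E) (hsrc : G.src e ∈ C) (htgt : G.tgt e = u₀) :
    ¬ G.EdgeIrredundant s t e := by
  rintro ⟨P, ⟨hw, hnd⟩, heP⟩
  classical
  set L := G.walkVerts s P with hL
  obtain ⟨i, hi, hPi⟩ := List.getElem_of_mem heP
  have hLlen : L.length = P.length + 1 := G.walkVerts_length s P
  have hsi : L[i]'(by omega) = G.src e := by
    rw [← hPi]; exact (G.walk_getElem hw i hi).1.symm
  have hti : L[i+1]'(by omega) = G.tgt e := by
    rw [← hPi]; exact (G.walk_getElem hw i hi).2.symm
  have hQ : ∃ j, ∃ h : j < L.length, L[j] ∈ C := ⟨i, by omega, by rw [hsi]; exact hsrc⟩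
  set j := Nat.find hQ with hj
  obtain ⟨hjlt, hjC⟩ := Nat.find_spec hQ
  have hji : j ≤ i := Nat.find_le ⟨by omega, by rw [hsi]; exact hsrc⟩
  have hjP : j ≤ P.length := by omega
  have hen : G.EntryNode s C (L[j]'hjlt) := by
    refine ⟨hjC, P.take j, ⟨(G.walk_take hw j hjP).1, ?_⟩, ?_⟩
    · rw [(G.walk_take hw j hjP).2]
      exact ((L.take_sublist (j+1)).nodup hnd)
    · intro x hx hxC
      rw [(G.walk_take hw j hjP).2] at hx
      obtain ⟨k, hk, hkx⟩ := List.getElem_of_mem hx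
      have hk1 : k < j + 1 := by
        have := hk; simp [List.length_take] at this; omega
      have hkL : k < L.length := by omega
      have hxk : x = L[k]'hkL := by
        rw [← hkx]; simp [List.getElem_take]; rfl
      rcases lt_or_eq_of_le (Nat.lt_succ_iff.mp hk1) with hlt | heq
      · exact absurd ⟨hkL, hxk ▸ hxC⟩ (Nat.find_min hQ hlt)
      · rw [hxk]; congr 1
  have hju : L[j]'hjlt = u₀ := huniq _ hen
  have : L[j]'hjlt = L[i+1]'(by omega) := by rw [hju, hti, htgt]
  have := (List.Nodup.getElem_inj_iff hnd).mp this
  omega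

lemma main_exit (s t : V) (C : Set V) (u₀ : V)
    (huniq : ∀ u, G.ExitNode t C u → u = u₀)
    (e : E) (hsrc : G.src e = u₀) (htgt : G.tgt e ∈ C) :
    ¬ G.EdgeIrredundant s t e := by
  rintro ⟨P, ⟨hw, hnd⟩, heP⟩
  classical
  set L := G.walkVerts s P with hL
  obtain ⟨i, hi, hPi⟩ := List.getElem_of_mem heP
  have hLlen : L.length = P.length + 1 := G.walkVerts_length s P
  have hsi : L[i]'(by omega) = G.src e := by
    rw [← hPi]; exact (G.walk_getElem hw i hi).1.symm
  have hti : L[i+1]'(by omega) = G.tgt e := by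
    rw [← hPi]; exact (G.walk_getElem hw i hi).2.symm
  set Q : ℕ → Prop := fun j => ∃ h : j < L.length, L[j] ∈ C with hQdef
  have hQ1 : Q (i+1) := ⟨by omega, by rw [hti]; exact htgt⟩
  set j := Nat.findGreatest Q P.length with hj
  have hQj : Q j := Nat.findGreatest_spec (n := P.length) (m := i+1) (by omega) hQ1
  have hij : i + 1 ≤ j := by
    by_contra hc
    exact Nat.findGreatest_is_greatest (n := P.length) (by omega) (by omega) hQ1
  obtain ⟨hjlt, hjC⟩ := hQj
  have hjle : j ≤ P.length := Nat.findGreatest_le _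
  have hex : G.ExitNode t C (L[j]'hjlt) := by
    refine ⟨hjC, P.drop j, ⟨(G.walk_drop hw j hjle).1, ?_⟩, ?_⟩
    · rw [(G.walk_drop hw j hjle).2]
      exact ((L.drop_sublist j).nodup hnd)
    · intro x hx hxC
      rw [(G.walk_drop hw j hjle).2] at hx
      obtain ⟨k, hk, hkx⟩ := List.getElem_of_mem hx
      have hk1 : j + k < L.length := by
        have := hk; rw [List.length_drop, ← hL] at this; omega
      have hxk : x = L[j+k]'hk1 := by
        rw [← hkx]; simp [List.getElem_drop]; rfl
      rcases Nat.eq_zero_or_pos k with h0 | h0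
      · rw [hxk]; congr 1; omega
      · exfalso
        exact Nat.findGreatest_is_greatest (n := P.length)
          (show Nat.findGreatest Q P.length < j + k by omega)
          (show j + k ≤ P.length by omega) ⟨hk1, hxk ▸ hxC⟩
  have hju : L[j]'hjlt = u₀ := huniq _ hex
  have : L[i]'(by omega) = L[j]'hjlt := by rw [hju, hsi, hsrc]
  have := (List.Nodup.getElem_inj_iff hnd).mp this
  omega

lemma cycle_in_edge {v : V} {p : List E} (hC : G.IsSimpleCycle v p) {u : V}
    (hu : u ∈ G.cycleSet v p) :
    ∃ e ∈ p, G.tgt e = u ∧ G.src e ∈ G.cycleSet v p := by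
  obtain ⟨hw, hne, hnd⟩ := hC
  set L := G.walkVerts v p with hL
  have hLlen : L.length = p.length + 1 := G.walkVerts_length v p
  have hn : 1 ≤ p.length := List.length_pos_iff.mpr hne
  have hu' : u ∈ L.dropLast := hu
  have hdlen : L.dropLast.length = p.length := by
    rw [List.length_dropLast, hLlen]; omega
  obtain ⟨i, hi, hix⟩ := List.getElem_of_mem hu'
  have hi' : i < p.length := by omega
  have hdl : ∀ k (h : k < p.length),
      L.dropLast[k]'(by omega) = L[k]'(by omega) :=
    fun k h => List.getElem_dropLast ..
  have hiu : L[i]'(by omega) = u := by rw [← hdl i hi']; exact hix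
  have hlast : L[p.length]'(by omega) = v := G.walk_getElem_last hw
  have h0 : L[0]'(by omega) = v := G.walkVerts_getElem_zero v p (by rw [← hL]; omega)
  have hmem : ∀ k (h : k < p.length), L[k]'(by omega) ∈ G.cycleSet v p := by
    intro k h
    show _ ∈ L.dropLast
    rw [← hdl k h]
    exact List.getElem_mem _
  rcases Nat.eq_zero_or_pos i with h0i | h0i
  · refine ⟨p[p.length - 1]'(by omega), List.getElem_mem _, ?_, ?_⟩
    · have h2 := (G.walk_getElem hw (p.length - 1) (by omega)).2
      have he : p.length - 1 + 1 = p.length := by omega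
      rw [h2, ← hiu]
      subst h0i
      rw [h0]
      exact (getElem_congr_idx L he (by omega)).trans hlast
    · rw [(G.walk_getElem hw (p.length - 1) (by omega)).1]
      exact hmem _ (by omega)
  · refine ⟨p[i - 1]'(by omega), List.getElem_mem _, ?_, ?_⟩
    · have h2 := (G.walk_getElem hw (i - 1) (by omega)).2
      have he : i - 1 + 1 = i := by omega
      rw [h2, ← hiu]
      exact getElem_congr_idx L he (by omega)
    · rw [(G.walk_getElem hw (i - 1) (by omega)).1]
      exact hmem _ (by omega)

lemma cycle_out_edge {v : V} {p : List E} (hC : G.IsSimpleCycle v p) {u : V}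
    (hu : u ∈ G.cycleSet v p) :
    ∃ e ∈ p, G.src e = u ∧ G.tgt e ∈ G.cycleSet v p := by
  obtain ⟨hw, hne, hnd⟩ := hC
  set L := G.walkVerts v p with hL
  have hLlen : L.length = p.length + 1 := G.walkVerts_length v p
  have hn : 1 ≤ p.length := List.length_pos_iff.mpr hne
  have hu' : u ∈ L.dropLast := hu
  have hdlen : L.dropLast.length = p.length := by
    rw [List.length_dropLast, hLlen]; omega
  obtain ⟨i, hi, hix⟩ := List.getElem_of_mem hu'
  have hi' : i < p.length := by omega
  have hdl : ∀ k (h : k < p.length),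
      L.dropLast[k]'(by omega) = L[k]'(by omega) :=
    fun k h => List.getElem_dropLast ..
  have hiu : L[i]'(by omega) = u := by rw [← hdl i hi']; exact hix
  have hlast : L[p.length]'(by omega) = v := G.walk_getElem_last hw
  have h0 : L[0]'(by omega) = v := G.walkVerts_getElem_zero v p (by rw [← hL]; omega)
  have hmem : ∀ k (h : k < p.length), L[k]'(by omega) ∈ G.cycleSet v p := by
    intro k h
    show _ ∈ L.dropLast
    rw [← hdl k h]
    exact List.getElem_mem _
  refine ⟨p[i]'hi', List.getElem_mem _, ?_, ?_⟩
  · rw [(G.walk_getElem hw i hi').1]; exact hiu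
  · rw [(G.walk_getElem hw i hi').2]
    rcases lt_or_eq_of_le (Nat.succ_le_of_lt hi' : i + 1 ≤ p.length) with hlt | heq
    · exact hmem _ hlt
    · have hv : L[i+1]'(by omega) = v :=
        (getElem_congr_idx L heq (by omega)).trans hlast
      rw [hv.trans h0.symm]
      exact hmem 0 (by omega)

end MultiDigraph

open MultiDigraph in
/-- In an `st`-connected net, a simple cycle with exactly one entry node or
exactly one exit node contains a redundant edge. -/
theorem stmt6 {V E : Type} (G : MultiDigraph V E) (s t : V)
    (hconn : G.STConnected s t) (v : V) (p : List E)
    (hC : G.IsSimpleCycle v p)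
    (h : (∃! u, G.EntryNode s (G.cycleSet v p) u) ∨
         (∃! u, G.ExitNode t (G.cycleSet v p) u)) :
    ∃ e ∈ p, ¬ G.EdgeIrredundant s t e := by
  rcases h with ⟨u₀, hu₀, huniq⟩ | ⟨u₀, hu₀, huniq⟩
  · obtain ⟨e, hep, htgt, hsrc⟩ := G.cycle_in_edge hC hu₀.1
    exact ⟨e, hep, G.main_entry s t _ u₀ (fun u hu => huniq u hu) e hsrc htgt⟩
  · obtain ⟨e, hep, hsrc, htgt⟩ := G.cycle_out_edge hC hu₀.1
    exact ⟨e, hep, G.main_exit s t _ u₀ (fun u hu => huniq u hu) e hsrc htgt⟩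
end

section
/- Let C be a splittable simple cycle in an st-connected net and let h be a neutral hyper-chord from the entry region E to the exit region X of C. Then no internal vertex of h lies on any entry path or exit path of C. -/
namespace MultiDigraph

variable {V E : Type} [DecidableEq V]

/-- The cycle `(v, p)`, as written, is splittable: every entry node occurs
no later than every exit node in the vertex list of the cycle. -/
def SplittableAt (G : MultiDigraph V E) (s t v : V) (p : List E) : Prop :=
  G.IsSimpleCycle v p ∧
    ∀ u w, G.EntryNode s (G.cycleSet v p) u → G.ExitNode t (G.cycleSet v p) w →
      (G.cycleVerts v p).idxOf u ≤ (G.cycleVerts v p).idxOf w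

/-- A cycle is splittable if some cyclic rewriting of it is splittable. -/
def Splittable (G : MultiDigraph V E) (s t v : V) (p : List E) : Prop :=
  G.IsSimpleCycle v p ∧ ∃ (n : ℕ) (v' : V), G.SplittableAt s t v' (p.rotate n)

/-- The entry region of a splittable cycle written starting at the first entry
node: vertices strictly before the first exit node `ξ1`. -/
def Ereg (G : MultiDigraph V E) (v : V) (p : List E) (ξ1 : V) : Set V :=
  {x | x ∈ G.cycleVerts v p ∧
    (G.cycleVerts v p).idxOf x < (G.cycleVerts v p).idxOf ξ1}

/-- The exit region: from the first exit node `ξ1` (excluded iff `ξ1` is the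
last entry node `lastE`) up to the last exit node `lastX`. -/
def Xreg (G : MultiDigraph V E) (v : V) (p : List E) (ξ1 lastE lastX : V) : Set V :=
  {x | x ∈ G.cycleVerts v p ∧
    (if ξ1 = lastE then (G.cycleVerts v p).idxOf ξ1 < (G.cycleVerts v p).idxOf x
      else (G.cycleVerts v p).idxOf ξ1 ≤ (G.cycleVerts v p).idxOf x) ∧
    (G.cycleVerts v p).idxOf x ≤ (G.cycleVerts v p).idxOf lastX}

/-- The neutral region: vertices strictly after the last exit node `lastX`. -/
def Nreg (G : MultiDigraph V E) (v : V) (p : List E) (lastX : V) : Set V :=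
  {x | x ∈ G.cycleVerts v p ∧
    (G.cycleVerts v p).idxOf lastX < (G.cycleVerts v p).idxOf x}

/-- Data of a splittable cycle written starting at its first entry node `v`,
with first exit node `ξ1`, last entry node `lastE` and last exit node `lastX`. -/
structure SplitData (G : MultiDigraph V E) (s t v : V) (p : List E)
    (ξ1 lastE lastX : V) : Prop where
  splitAt : G.SplittableAt s t v p
  base_entry : G.EntryNode s (G.cycleSet v p) v
  firstExit : G.ExitNode t (G.cycleSet v p) ξ1 ∧
    ∀ w, G.ExitNode t (G.cycleSet v p) w →
      (G.cycleVerts v p).idxOf ξ1 ≤ (G.cycleVerts v p).idxOf w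
  lastEntry : G.EntryNode s (G.cycleSet v p) lastE ∧
    ∀ u, G.EntryNode s (G.cycleSet v p) u →
      (G.cycleVerts v p).idxOf u ≤ (G.cycleVerts v p).idxOf lastE
  lastExit : G.ExitNode t (G.cycleSet v p) lastX ∧
    ∀ w, G.ExitNode t (G.cycleSet v p) w →
      (G.cycleVerts v p).idxOf w ≤ (G.cycleVerts v p).idxOf lastX

/-- A hyper-chord for the cycle `(v,p)` from `x` to `y`: a simple path between
two cycle vertices using at least one edge not on the cycle. -/
def HyperChord (G : MultiDigraph V E) (v : V) (p : List E) (x y : V)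
    (h : List E) : Prop :=
  x ∈ G.cycleSet v p ∧ y ∈ G.cycleSet v p ∧ G.IsSimplePath x h y ∧ ∃ e ∈ h, e ∉ p

/-- A neutral hyper-chord: all of its vertices lying on the cycle, other than
its extremes, belong to the neutral region `Nr`. -/
def NeutralHyperChord (G : MultiDigraph V E) (v : V) (p : List E) (x y : V)
    (h : List E) (Nr : Set V) : Prop :=
  G.HyperChord v p x y h ∧
    ∀ z ∈ G.walkVerts x h, z ∈ G.cycleSet v p → z = x ∨ z = y ∨ z ∈ Nr

/-- `f` is the target in the neutral region of a neutral hyper-chord from the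
entry region. -/
def TargetFromE (G : MultiDigraph V E) (v : V) (p : List E) (ξ1 lastX f : V) : Prop :=
  ∃ x ∈ G.Ereg v p ξ1, ∃ h, G.NeutralHyperChord v p x f h (G.Nreg v p lastX)

/-- `ℓ` is the source in the neutral region of a neutral hyper-chord to the
exit region. -/
def SourceToX (G : MultiDigraph V E) (v : V) (p : List E)
    (ξ1 lastE lastX ℓ : V) : Prop :=
  ∃ y ∈ G.Xreg v p ξ1 lastE lastX, ∃ h,
    G.NeutralHyperChord v p ℓ y h (G.Nreg v p lastX)

/-- The path `(u, q)` touches the splitter of the splittable cycle `(v,p)`: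
the splitter is the vertex `ξ1` if `ξ1 = lastE`, and otherwise the edge of the
cycle entering `ξ1`. -/
def TouchesSplitter (G : MultiDigraph V E) (p : List E) (ξ1 lastE u : V)
    (q : List E) : Prop :=
  (ξ1 = lastE ∧ ξ1 ∈ G.walkVerts u q) ∨
  (ξ1 ≠ lastE ∧ ∃ e ∈ q, e ∈ p ∧ G.tgt e = ξ1)

end MultiDigraph

namespace MultiDigraph

variable {V E : Type} (G : MultiDigraph V E)

lemma walkVerts_ne_nil (u : V) (p : List E) : G.walkVerts u p ≠ [] := by
  cases p <;> simp [walkVerts]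

lemma mem_walkVerts_start (u : V) (p : List E) : u ∈ G.walkVerts u p := by
  cases p <;> simp [walkVerts]

lemma mem_walkVerts_end {u v : V} {p : List E} (h : G.IsWalk u p v) :
    v ∈ G.walkVerts u p := by
  induction p generalizing u with
  | nil => cases h; exact G.mem_walkVerts_start _ _
  | cons e p ih => exact List.mem_cons_of_mem _ (ih h.2)

lemma mem_walkVerts_cons {a u : V} {e : E} {p : List E} :
    a ∈ G.walkVerts u (e :: p) ↔ a = u ∨ a ∈ G.walkVerts (G.tgt e) p := by
  show a ∈ u :: G.walkVerts (G.tgt e) p ↔ _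
  simp

lemma isWalk_append_s8 {u z v : V} {p₁ p₂ : List E} (h₁ : G.IsWalk u p₁ z)
    (h₂ : G.IsWalk z p₂ v) : G.IsWalk u (p₁ ++ p₂) v := by
  induction p₁ generalizing u with
  | nil => cases h₁; exact h₂
  | cons e p ih => exact ⟨h₁.1, ih h₁.2⟩

lemma walkVerts_append {u z : V} {p₁ : List E} (h₁ : G.IsWalk u p₁ z) (p₂ : List E) :
    G.walkVerts u (p₁ ++ p₂) = (G.walkVerts u p₁).dropLast ++ G.walkVerts z p₂ := by
  induction p₁ generalizing u with
  | nil => cases h₁; simp [walkVerts]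
  | cons e p ih =>
      show u :: G.walkVerts (G.tgt e) (p ++ p₂) = _
      rw [ih h₁.2]
      show _ = ((u :: G.walkVerts (G.tgt e) p).dropLast) ++ _
      rw [List.dropLast_cons_of_ne_nil (G.walkVerts_ne_nil _ _)]
      simp

lemma splitFirst {u v z : V} {p : List E} (hw : G.IsWalk u p v)
    (hz : z ∈ G.walkVerts u p) :
    ∃ p₁ p₂, p = p₁ ++ p₂ ∧ G.IsWalk u p₁ z ∧ G.IsWalk z p₂ v ∧
      z ∉ (G.walkVerts u p₁).dropLast := by
  induction p generalizing u with
  | nil =>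
      refine ⟨[], [], rfl, ?_, ?_, ?_⟩
      · simp [walkVerts] at hz; exact hz.symm
      · simp [walkVerts] at hz; rw [← hz] at hw; exact hw
      · simp [walkVerts]
  | cons e p ih =>
      by_cases hzu : z = u
      · exact ⟨[], e :: p, rfl, hzu.symm, hzu ▸ hw, by simp [walkVerts]⟩
      · have hz' : z ∈ G.walkVerts (G.tgt e) p := by
          rcases G.mem_walkVerts_cons.1 hz with h | h
          · exact absurd h hzu
          · exact h
        obtain ⟨p₁, p₂, hpe, h1, h2, h3⟩ := ih hw.2 hz'
        refine ⟨e :: p₁, p₂, by rw [hpe]; rfl, ⟨hw.1, h1⟩, h2, ?_⟩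
        show z ∉ ((u :: G.walkVerts (G.tgt e) p₁).dropLast)
        rw [List.dropLast_cons_of_ne_nil (G.walkVerts_ne_nil _ _)]
        intro hmem
        rcases List.mem_cons.1 hmem with h | h
        · exact hzu h
        · exact h3 h

lemma firstC (C : Set V) {u v : V} {p : List E} (hw : G.IsWalk u p v) (hv : v ∈ C) :
    ∃ w p₁, G.IsWalk u p₁ w ∧ w ∈ C ∧ (∀ x ∈ G.walkVerts u p₁, x ∈ C → x = w) ∧
      ∀ x ∈ G.walkVerts u p₁, x ∈ G.walkVerts u p := by
  classical
  induction p generalizing u with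
  | nil =>
      refine ⟨v, [], hw, hv, ?_, fun x hx => hx⟩
      intro a ha haC
      simp [walkVerts] at ha
      rw [ha, hw]
  | cons e p ih =>
      by_cases hu : u ∈ C
      · refine ⟨u, [], rfl, hu, by simp [walkVerts], ?_⟩
        intro a ha
        simp [walkVerts] at ha
        simp [walkVerts, ha]
      · obtain ⟨w, p₁, h1, h2, h3, h4⟩ := ih hw.2
        refine ⟨w, e :: p₁, ⟨hw.1, h1⟩, h2, ?_, ?_⟩
        · intro a ha haC
          rcases G.mem_walkVerts_cons.1 ha with h | h
          · exact absurd (h ▸ haC) hu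
          · exact h3 a h haC
        · intro a ha
          rcases G.mem_walkVerts_cons.1 ha with h | h
          · exact G.mem_walkVerts_cons.2 (Or.inl h)
          · exact G.mem_walkVerts_cons.2 (Or.inr (h4 a h))

lemma lastC (C : Set V) {u v : V} {p : List E} (hw : G.IsWalk u p v) :
    (∀ x ∈ G.walkVerts u p, x ∉ C) ∨
    ∃ w p₂, G.IsWalk w p₂ v ∧ w ∈ C ∧ (∀ x ∈ G.walkVerts w p₂, x ∈ C → x = w) ∧
      ∀ x ∈ G.walkVerts w p₂, x ∈ G.walkVerts u p := by
  classical
  induction p generalizing u with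
  | nil =>
      by_cases hu : u ∈ C
      · exact Or.inr ⟨u, [], hw, hu, by simp [walkVerts], by simp⟩
      · refine Or.inl ?_
        intro a ha
        simp [walkVerts] at ha
        rwa [ha]
  | cons e p ih =>
      rcases ih hw.2 with hnone | ⟨w, p₂, h1, h2, h3, h4⟩
      · by_cases hu : u ∈ C
        · refine Or.inr ⟨u, e :: p, hw, hu, ?_, fun a ha => ha⟩
          intro a ha haC
          rcases G.mem_walkVerts_cons.1 ha with h | h
          · exact h
          · exact absurd haC (hnone a h)
        · refine Or.inl ?_
          intro a ha
          rcases G.mem_walkVerts_cons.1 ha with h | h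
          · rwa [h]
          · exact hnone a h
      · exact Or.inr ⟨w, p₂, h1, h2, h3, fun a ha => List.mem_cons_of_mem _ (h4 a ha)⟩

lemma toSimple_aux [DecidableEq V] (n : ℕ) :
    ∀ (u v : V) (p : List E), p.length ≤ n → G.IsWalk u p v →
    ∃ q, G.IsWalk u q v ∧ (G.walkVerts u q).Nodup ∧
      ∀ x ∈ G.walkVerts u q, x ∈ G.walkVerts u p := by
  induction n with
  | zero =>
      intro u v p hlen hw
      rw [Nat.le_zero, List.length_eq_zero_iff] at hlen
      subst hlen
      cases hw
      exact ⟨[], rfl, by simp [walkVerts], fun x hx => hx⟩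
  | succ n ih =>
      intro u v p hlen hw
      by_cases hnd : (G.walkVerts u p).Nodup
      · exact ⟨p, hw, hnd, fun x hx => hx⟩
      · obtain ⟨z, hzdup⟩ := List.exists_duplicate_iff_not_nodup.2 hnd
        have hzcount : 2 ≤ List.count z (G.walkVerts u p) :=
          List.duplicate_iff_two_le_count.1 hzdup
        have hzmem : z ∈ G.walkVerts u p := List.count_pos_iff.1 (by omega)
        obtain ⟨p₁, p₂, rfl, hw1, hw2, hnotin⟩ := G.splitFirst hw hzmem
        have hdec := G.walkVerts_append hw1 p₂
        rw [hdec, List.count_append, List.count_eq_zero_of_not_mem hnotin] at hzcount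
        simp only [Nat.zero_add] at hzcount
        cases p₂ with
        | nil =>
            exfalso
            simp [walkVerts, List.count_cons] at hzcount
        | cons e p₂' =>
            have hz' : z ∈ G.walkVerts (G.tgt e) p₂' := by
              have h1 : G.walkVerts z (e :: p₂') = z :: G.walkVerts (G.tgt e) p₂' := rfl
              rw [h1, List.count_cons_self] at hzcount
              exact List.count_pos_iff.1 (by omega)
            obtain ⟨p₃, p₄, rfl, hw3, hw4, _⟩ := G.splitFirst hw2.2 hz'
            have hwnew : G.IsWalk u (p₁ ++ p₄) v := G.isWalk_append_s8 hw1 hw4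
            have hlen' : (p₁ ++ p₄).length ≤ n := by
              simp only [List.length_append, List.length_cons] at hlen ⊢
              omega
            obtain ⟨q, hq1, hq2, hq3⟩ := ih u v (p₁ ++ p₄) hlen' hwnew
            refine ⟨q, hq1, hq2, ?_⟩
            intro a ha
            have := hq3 a ha
            rw [G.walkVerts_append hw1] at this
            rw [hdec]
            rcases List.mem_append.1 this with h | h
            · exact List.mem_append_left _ h
            · refine List.mem_append_right _ ?_
              have hd2 := G.walkVerts_append (u := G.tgt e) hw3 p₄
              show a ∈ G.walkVerts z (e :: (p₃ ++ p₄))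
              show a ∈ z :: G.walkVerts (G.tgt e) (p₃ ++ p₄)
              rw [hd2]
              exact List.mem_cons_of_mem _ (List.mem_append_right _ h)

lemma toSimple [DecidableEq V] {u v : V} {p : List E} (hw : G.IsWalk u p v) :
    ∃ q, G.IsSimplePath u q v ∧ ∀ x ∈ G.walkVerts u q, x ∈ G.walkVerts u p := by
  obtain ⟨q, h1, h2, h3⟩ := G.toSimple_aux p.length u v p le_rfl hw
  exact ⟨q, ⟨h1, h2⟩, h3⟩

lemma mem_dropLast_start {u z : V} {p : List E} (hw : G.IsWalk u p z) (hne : z ≠ u) :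
    u ∈ (G.walkVerts u p).dropLast := by
  cases p with
  | nil => cases hw; exact absurd rfl hne
  | cons e p =>
      show u ∈ (u :: G.walkVerts (G.tgt e) p).dropLast
      rw [List.dropLast_cons_of_ne_nil (G.walkVerts_ne_nil _ _)]
      exact List.mem_cons_self

end MultiDigraph

open MultiDigraph in
/-- No internal vertex of a neutral hyper-chord from the entry region to the
exit region of a splittable simple cycle lies on any entry or exit path. -/
theorem stmt8 {V E : Type} [DecidableEq V] (G : MultiDigraph V E)
    (s t v : V) (p : List E) (ξ1 lastE lastX : V)
    (hconn : G.STConnected s t)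
    (hsd : G.SplitData s t v p ξ1 lastE lastX)
    (x y : V) (h : List E)
    (hx : x ∈ G.Ereg v p ξ1) (hy : y ∈ G.Xreg v p ξ1 lastE lastX)
    (hh : G.NeutralHyperChord v p x y h (G.Nreg v p lastX)) :
    ∀ z ∈ G.walkVerts x h, z ≠ x → z ≠ y →
      (∀ u q, G.IsEntryPath s (G.cycleSet v p) q u → z ∉ G.walkVerts s q) ∧
      (∀ u q, G.IsExitPath t (G.cycleSet v p) q u → z ∉ G.walkVerts u q) := by
  intro z hz hzx hzy
  obtain ⟨⟨hxC, hyC, ⟨hhw, hhnd⟩, -⟩, hneu⟩ := hh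
  obtain ⟨hxCV, hxlt⟩ := hx
  obtain ⟨hyCV, hyif, hyle⟩ := hy
  -- basic index facts
  have hexit_ge : ∀ w, G.ExitNode t (G.cycleSet v p) w → (G.cycleVerts v p).idxOf ξ1 ≤ (G.cycleVerts v p).idxOf w :=
    fun w hw => hsd.firstExit.2 w hw
  have hexit_le : ∀ w, G.ExitNode t (G.cycleSet v p) w → (G.cycleVerts v p).idxOf w ≤ (G.cycleVerts v p).idxOf lastX :=
    fun w hw => hsd.lastExit.2 w hw
  have hentry_le : ∀ w, G.EntryNode s (G.cycleSet v p) w → (G.cycleVerts v p).idxOf w ≤ (G.cycleVerts v p).idxOf ξ1 :=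
    fun w hw => hsd.splitAt.2 w ξ1 hw hsd.firstExit.1
  have hξX : (G.cycleVerts v p).idxOf ξ1 ≤ (G.cycleVerts v p).idxOf lastX := hexit_le ξ1 hsd.firstExit.1
  -- no entry node is y or in the neutral region
  have hentry_ne_y : ∀ w, G.EntryNode s (G.cycleSet v p) w → w ≠ y := by
    intro w hw hwy
    have hle := hentry_le w hw
    rw [hwy] at hle
    by_cases hcase : ξ1 = lastE
    · rw [if_pos hcase] at hyif
      omega
    · rw [if_neg hcase] at hyif
      have h1 : (G.cycleVerts v p).idxOf y ≤ (G.cycleVerts v p).idxOf lastE := by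
        have := hsd.lastEntry.2 w hw
        rwa [hwy] at this
      have h2 : (G.cycleVerts v p).idxOf lastE ≤ (G.cycleVerts v p).idxOf ξ1 :=
        hsd.splitAt.2 lastE ξ1 hsd.lastEntry.1 hsd.firstExit.1
      have h3 : (G.cycleVerts v p).idxOf lastE = (G.cycleVerts v p).idxOf ξ1 := by omega
      have hlE : lastE ∈ G.cycleVerts v p := hsd.lastEntry.1.1
      have hξ : ξ1 ∈ G.cycleVerts v p := hsd.firstExit.1.1
      exact hcase ((List.idxOf_inj hξ).1 h3.symm)
  have hentry_not_N : ∀ w, G.EntryNode s (G.cycleSet v p) w → w ∉ G.Nreg v p lastX := by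
    intro w hw ⟨_, hgt⟩
    exact absurd (hentry_le w hw) (by omega)
  have hexit_ne_x : ∀ w, G.ExitNode t (G.cycleSet v p) w → w ≠ x := by
    intro w hw hwx
    have := hexit_ge w hw
    rw [hwx] at this
    omega
  have hexit_not_N : ∀ w, G.ExitNode t (G.cycleSet v p) w → w ∉ G.Nreg v p lastX := by
    intro w hw ⟨_, hgt⟩
    exact absurd (hexit_le w hw) (by omega)
  constructor
  · -- entry paths
    intro u q hq hzq
    obtain ⟨huC, ⟨hqw, hqnd⟩, hqcond⟩ := hq
    obtain ⟨q₁, q₂, rfl, hw1, hw2, hzq1⟩ := G.splitFirst hqw hzq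
    obtain ⟨h₁, h₂, rfl, hh1, hh2, _⟩ := G.splitFirst hhw hz
    have hbig : G.IsWalk s (q₁ ++ h₂) y := G.isWalk_append_s8 hw1 hh2
    obtain ⟨w, p₁, hwp, hwC, honly, hsub⟩ := G.firstC (G.cycleSet v p) hbig hyC
    obtain ⟨q', hq', hq'sub⟩ := G.toSimple hwp
    have hwEntry : G.EntryNode s (G.cycleSet v p) w :=
      ⟨hwC, q', hq', fun a ha haC => honly a (hq'sub a ha) haC⟩
    have hw_mem : w ∈ G.walkVerts s (q₁ ++ h₂) := hsub w (G.mem_walkVerts_end hwp)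
    rw [G.walkVerts_append hw1] at hw_mem
    have hqdec := G.walkVerts_append hw1 q₂
    rcases List.mem_append.1 hw_mem with hw1' | hw2'
    · have hwq : w ∈ G.walkVerts s (q₁ ++ q₂) := by
        rw [hqdec]; exact List.mem_append_left _ hw1'
      have hwu : w = u := hqcond w hwq hwC
      have hu2 : u ∈ G.walkVerts z q₂ := G.mem_walkVerts_end hw2
      rw [hqdec] at hqnd
      exact (List.nodup_append.1 hqnd).2.2 u (hwu ▸ hw1') u hu2 rfl
    · have hw_in_h : w ∈ G.walkVerts x (h₁ ++ h₂) := by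
        rw [G.walkVerts_append hh1]; exact List.mem_append_right _ hw2'
      rcases hneu w hw_in_h hwC with hwx | hwy | hwN
      · -- w = x
        have hx1 : x ∈ (G.walkVerts x h₁).dropLast :=
          G.mem_dropLast_start hh1 hzx
        have hnd := hhnd
        rw [G.walkVerts_append hh1] at hnd
        exact (List.nodup_append.1 hnd).2.2 x hx1 x (hwx ▸ hw2') rfl
      · exact hentry_ne_y w hwEntry hwy
      · exact hentry_not_N w hwEntry hwN
  · -- exit paths
    intro u q hq hzq
    obtain ⟨huC, ⟨hqw, hqnd⟩, hqcond⟩ := hq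
    have hzu : z ≠ u := by
      intro hzu
      have hzC : z ∈ G.cycleSet v p := hzu ▸ huC
      rcases hneu z hz hzC with h | h | hN
      · exact hzx h
      · exact hzy h
      · exact hexit_not_N u ⟨huC, q, ⟨hqw, hqnd⟩, hqcond⟩ (hzu ▸ hN)
    obtain ⟨q₁, q₂, rfl, hw1, hw2, _⟩ := G.splitFirst hqw hzq
    obtain ⟨h₁, h₂, rfl, hh1, hh2, _⟩ := G.splitFirst hhw hz
    have hbig : G.IsWalk x (h₁ ++ q₂) t := G.isWalk_append_s8 hh1 hw2
    rcases G.lastC (G.cycleSet v p) hbig with hnone | ⟨w, p₂, hwp, hwC, honly, hsub⟩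
    · exact hnone x (G.mem_walkVerts_start _ _) hxC
    obtain ⟨q', hq', hq'sub⟩ := G.toSimple hwp
    have hwExit : G.ExitNode t (G.cycleSet v p) w :=
      ⟨hwC, q', hq', fun a ha haC => honly a (hq'sub a ha) haC⟩
    have hw_mem : w ∈ G.walkVerts x (h₁ ++ q₂) :=
      hsub w (G.mem_walkVerts_start _ _)
    rw [G.walkVerts_append hh1] at hw_mem
    rcases List.mem_append.1 hw_mem with hw1' | hw2'
    · have hw_in_h : w ∈ G.walkVerts x (h₁ ++ h₂) := by
        rw [G.walkVerts_append hh1]; exact List.mem_append_left _ hw1'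
      rcases hneu w hw_in_h hwC with hwx | hwy | hwN
      · exact hexit_ne_x w hwExit hwx
      · -- w = y
        have hy2 : y ∈ G.walkVerts z h₂ := G.mem_walkVerts_end hh2
        have hnd := hhnd
        rw [G.walkVerts_append hh1] at hnd
        exact (List.nodup_append.1 hnd).2.2 y (hwy ▸ hw1') y hy2 rfl
      · exact hexit_not_N w hwExit hwN
    · have hwq : w ∈ G.walkVerts u (q₁ ++ q₂) := by
        rw [G.walkVerts_append hw1]; exact List.mem_append_right _ hw2'
      have hwu : w = u := hqcond w hwq hwC
      have hu1 : u ∈ (G.walkVerts u q₁).dropLast := G.mem_dropLast_start hw1 hzu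
      rw [G.walkVerts_append hw1] at hqnd
      exact (List.nodup_append.1 hqnd).2.2 u hu1 u (hwu ▸ hw2') rfl
end
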